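/- If δ is a unit in R, then the BMW algebra BA_n(R) is isomorphic to the algebra generated by invertible elements X_1,…,X_{n−1} subject only to the braid relations, X_ie_i = e_iX_i = λe_i, and e_iX_j^{±1}e_i = λ^{∓1}e_i for |i−j|=1, where e_i is defined as e_i := 1 − (X_i − X_i^{-1})/δ. In particular, with this definition of e_i, the relations e_i^2 = x·e_i, e_ie_j = e_je_i for |i−j|>1, e_iX_j^{±1}X_i^{±1} = X_j^{±1}X_i^{±1}e_j for |i−j|=1, and e_ie_je_i = e_i for |i−j|=1 all hold. -/

import Mathlib

/-- Generators of the type-A Birman–Murakami–Wenzl algebra `BA_n`. -/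
inductive BAGen where
  | X (i : ℕ)
  | Xinv (i : ℕ)
  | e (i : ℕ)

namespace BAGen

variable (R : Type) [CommRing R]

/-- The canonical image of a generator in the free algebra. -/
noncomputable abbrev g (a : BAGen) : FreeAlgebra R BAGen := FreeAlgebra.ι R a

/-- The defining relations of the Birman–Murakami–Wenzl algebra `BA_n(R)` with
parameters `x, λ, λ⁻¹, δ`. -/
inductive BARel (n : ℕ) (x lam laminv δ : R) :
    FreeAlgebra R BAGen → FreeAlgebra R BAGen → Prop
  | X_Xinv : ∀ i, 1 ≤ i → i ≤ n - 1 → BARel n x lam laminv δ (g R (X i) * g R (Xinv i)) 1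
  | Xinv_X : ∀ i, 1 ≤ i → i ≤ n - 1 → BARel n x lam laminv δ (g R (Xinv i) * g R (X i)) 1
  | Xcomm : ∀ i j, 1 ≤ i → i ≤ n - 1 → 1 ≤ j → j ≤ n - 1 → 1 < Nat.dist i j →
      BARel n x lam laminv δ (g R (X i) * g R (X j)) (g R (X j) * g R (X i))
  | braid : ∀ i j, 1 ≤ i → i ≤ n - 1 → 1 ≤ j → j ≤ n - 1 → Nat.dist i j = 1 →
      BARel n x lam laminv δ (g R (X i) * g R (X j) * g R (X i))
        (g R (X j) * g R (X i) * g R (X j))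
  | Xe : ∀ i, 1 ≤ i → i ≤ n - 1 →
      BARel n x lam laminv δ (g R (X i) * g R (e i)) (lam • g R (e i))
  | eX : ∀ i, 1 ≤ i → i ≤ n - 1 →
      BARel n x lam laminv δ (g R (e i) * g R (X i)) (lam • g R (e i))
  | eXe : ∀ i j, 1 ≤ i → i ≤ n - 1 → 1 ≤ j → j ≤ n - 1 → Nat.dist i j = 1 →
      BARel n x lam laminv δ (g R (e i) * g R (X j) * g R (e i)) (laminv • g R (e i))
  | eXinve : ∀ i j, 1 ≤ i → i ≤ n - 1 → 1 ≤ j → j ≤ n - 1 → Nat.dist i j = 1 →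
      BARel n x lam laminv δ (g R (e i) * g R (Xinv j) * g R (e i)) (lam • g R (e i))
  | ee : ∀ i, 1 ≤ i → i ≤ n - 1 →
      BARel n x lam laminv δ (g R (e i) * g R (e i)) (x • g R (e i))
  | Xinv_eq : ∀ i, 1 ≤ i → i ≤ n - 1 →
      BARel n x lam laminv δ (g R (Xinv i)) (g R (X i) - δ • 1 + δ • g R (e i))
  | ecomm : ∀ i j, 1 ≤ i → i ≤ n - 1 → 1 ≤ j → j ≤ n - 1 → 1 < Nat.dist i j →
      BARel n x lam laminv δ (g R (e i) * g R (e j)) (g R (e j) * g R (e i))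
  | eXX : ∀ i j, 1 ≤ i → i ≤ n - 1 → 1 ≤ j → j ≤ n - 1 → Nat.dist i j = 1 →
      BARel n x lam laminv δ (g R (e i) * (g R (X j) * g R (X i)))
        (g R (X j) * g R (X i) * g R (e j))
  | eXinvXinv : ∀ i j, 1 ≤ i → i ≤ n - 1 → 1 ≤ j → j ≤ n - 1 → Nat.dist i j = 1 →
      BARel n x lam laminv δ (g R (e i) * (g R (Xinv j) * g R (Xinv i)))
        (g R (Xinv j) * g R (Xinv i) * g R (e j))
  | eee : ∀ i j, 1 ≤ i → i ≤ n - 1 → 1 ≤ j → j ≤ n - 1 → Nat.dist i j = 1 →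
      BARel n x lam laminv δ (g R (e i) * g R (e j) * g R (e i)) (g R (e i))

end BAGen

/-- The type-A Birman–Murakami–Wenzl algebra `BA_n(R)`, presented by generators
`X_i, X_i⁻¹, e_i` modulo the defining relations. -/
noncomputable def BA (R : Type) [CommRing R] (n : ℕ) (x lam laminv δ : R) : Type :=
  RingQuot (BAGen.BARel R n x lam laminv δ)

noncomputable instance {R : Type} [CommRing R] {n : ℕ} {x lam laminv δ : R} :
    Ring (BA R n x lam laminv δ) :=
  inferInstanceAs (Ring (RingQuot _))

noncomputable instance {R : Type} [CommRing R] {n : ℕ} {x lam laminv δ : R} :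
    Algebra R (BA R n x lam laminv δ) :=
  inferInstanceAs (Algebra R (RingQuot _))

/-- Generators of the reduced presentation: invertible braid generators only. -/
inductive BAredGen where
  | X (i : ℕ)
  | Xinv (i : ℕ)

namespace BAredGen

variable (R : Type) [CommRing R]

/-- The canonical image of a generator in the free algebra. -/
noncomputable abbrev g (a : BAredGen) : FreeAlgebra R BAredGen := FreeAlgebra.ι R a

/-- The element `e_i := 1 − δ⁻¹(X_i − X_i⁻¹)` of the free algebra on the
reduced generators. -/
noncomputable def eExpr (δinv : R) (i : ℕ) : FreeAlgebra R BAredGen :=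
  1 - δinv • (g R (X i) - g R (Xinv i))

/-- The reduced presentation of the BMW algebra: invertible generators `X_i`
subject only to the braid relations, `X_i e_i = e_i X_i = λ e_i` and
`e_i X_j^{±1} e_i = λ^{∓1} e_i` for `|i−j| = 1`, where
`e_i := 1 − δ⁻¹(X_i − X_i⁻¹)`. -/
inductive BAredRel (n : ℕ) (lam laminv δinv : R) :
    FreeAlgebra R BAredGen → FreeAlgebra R BAredGen → Prop
  | X_Xinv : ∀ i, 1 ≤ i → i ≤ n - 1 →
      BAredRel n lam laminv δinv (g R (X i) * g R (Xinv i)) 1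
  | Xinv_X : ∀ i, 1 ≤ i → i ≤ n - 1 →
      BAredRel n lam laminv δinv (g R (Xinv i) * g R (X i)) 1
  | Xcomm : ∀ i j, 1 ≤ i → i ≤ n - 1 → 1 ≤ j → j ≤ n - 1 → 1 < Nat.dist i j →
      BAredRel n lam laminv δinv (g R (X i) * g R (X j)) (g R (X j) * g R (X i))
  | braid : ∀ i j, 1 ≤ i → i ≤ n - 1 → 1 ≤ j → j ≤ n - 1 → Nat.dist i j = 1 →
      BAredRel n lam laminv δinv (g R (X i) * g R (X j) * g R (X i))
        (g R (X j) * g R (X i) * g R (X j))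
  | Xe : ∀ i, 1 ≤ i → i ≤ n - 1 →
      BAredRel n lam laminv δinv (g R (X i) * eExpr R δinv i) (lam • eExpr R δinv i)
  | eX : ∀ i, 1 ≤ i → i ≤ n - 1 →
      BAredRel n lam laminv δinv (eExpr R δinv i * g R (X i)) (lam • eExpr R δinv i)
  | eXe : ∀ i j, 1 ≤ i → i ≤ n - 1 → 1 ≤ j → j ≤ n - 1 → Nat.dist i j = 1 →
      BAredRel n lam laminv δinv (eExpr R δinv i * g R (X j) * eExpr R δinv i)
        (laminv • eExpr R δinv i)
  | eXinve : ∀ i j, 1 ≤ i → i ≤ n - 1 → 1 ≤ j → j ≤ n - 1 → Nat.dist i j = 1 →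
      BAredRel n lam laminv δinv (eExpr R δinv i * g R (Xinv j) * eExpr R δinv i)
        (lam • eExpr R δinv i)

end BAredGen

/-- The algebra of the reduced presentation. -/
noncomputable def BAred (R : Type) [CommRing R] (n : ℕ) (lam laminv δinv : R) : Type :=
  RingQuot (BAredGen.BAredRel R n lam laminv δinv)

noncomputable instance {R : Type} [CommRing R] {n : ℕ} {lam laminv δinv : R} :
    Ring (BAred R n lam laminv δinv) :=
  inferInstanceAs (Ring (RingQuot _))

noncomputable instance {R : Type} [CommRing R] {n : ℕ} {lam laminv δinv : R} :
    Algebra R (BAred R n lam laminv δinv) :=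
  inferInstanceAs (Algebra R (RingQuot _))

namespace BAred

variable {R : Type} [CommRing R] {n : ℕ} {lam laminv δinv : R}

/-- The image of a generator in the reduced algebra. -/
noncomputable def gen (a : BAredGen) : BAred R n lam laminv δinv :=
  RingQuot.mkAlgHom R (BAredGen.BAredRel R n lam laminv δinv) (FreeAlgebra.ι R a)

/-- The element `e_i := 1 − δ⁻¹(X_i − X_i⁻¹)` of the reduced algebra. -/
noncomputable def E (i : ℕ) : BAred R n lam laminv δinv :=
  1 - δinv • (gen (BAredGen.X i) - gen (BAredGen.Xinv i))

end BAred


section AuxMonoid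

variable {S : Type*} [Monoid S]

lemma aux_comm_inv_right {a b bi : S} (h : a * b = b * a) (hbi : b * bi = 1)
    (hib : bi * b = 1) : a * bi = bi * a := by
  calc a * bi = bi * b * a * bi := by rw [hib, one_mul]
    _ = bi * (b * a) * bi := by rw [mul_assoc bi b a]
    _ = bi * (a * b) * bi := by rw [h]
    _ = bi * (a * (b * bi)) := by simp only [mul_assoc]
    _ = bi * a := by rw [hbi, mul_one]

lemma aux_braid_conj {a b ai bi : S} (hai : ai * a = 1) (hbi : b * bi = 1)
    (hb : a * b * a = b * a * b) : ai * b * a = b * a * bi := by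
  calc ai * b * a = ai * b * a * (b * bi) := by rw [hbi, mul_one]
    _ = ai * (b * a * b) * bi := by simp only [mul_assoc]
    _ = ai * (a * b * a) * bi := by rw [← hb]
    _ = ai * a * (b * a * bi) := by simp only [mul_assoc]
    _ = b * a * bi := by rw [hai, one_mul]

lemma aux_inv_braid {a b ai bi : S} (ha : a * ai = 1) (hai : ai * a = 1) (hb : b * bi = 1)
    (hib : bi * b = 1) (hbr : a * b * a = b * a * b) : ai * bi * ai = bi * ai * bi := by
  have h1 : ai * bi * ai * (a * b * a) = 1 := by
    calc ai * bi * ai * (a * b * a) = ai * (bi * (ai * a * (b * a))) := by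
          simp only [mul_assoc]
      _ = ai * (bi * (b * a)) := by rw [hai, one_mul]
      _ = ai * (bi * b * a) := by rw [mul_assoc bi b a]
      _ = ai * a := by rw [hib, one_mul]
      _ = 1 := hai
  have h2 : b * a * b * (bi * ai * bi) = 1 := by
    calc b * a * b * (bi * ai * bi) = b * (a * (b * bi * (ai * bi))) := by
          simp only [mul_assoc]
      _ = b * (a * (ai * bi)) := by rw [hb, one_mul]
      _ = b * (a * ai * bi) := by rw [mul_assoc a ai bi]
      _ = b * bi := by rw [ha, one_mul]
      _ = 1 := hb
  calc ai * bi * ai = ai * bi * ai * (b * a * b * (bi * ai * bi)) := by rw [h2, mul_one]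
    _ = ai * bi * ai * (a * b * a) * (bi * ai * bi) := by rw [← hbr, ← mul_assoc]
    _ = bi * ai * bi := by rw [h1, one_mul]

end AuxMonoid

section AuxAlgebra

variable {R : Type} [CommRing R] {S : Type*} [Ring S] [Algebra R S]

lemma aux_one_sub_smul_mul {s : R} {A c B : S} (h : A * c = c * B) :
    (1 - s • A) * c = c * (1 - s • B) := by
  simp only [sub_mul, mul_sub, one_mul, mul_one, smul_mul_assoc, mul_smul_comm, h]

lemma aux_one_sub_smul_comm {s : R} {A B : S} (h : A * B = B * A) :
    (1 - s • A) * (1 - s • B) = (1 - s • B) * (1 - s • A) := by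
  simp only [sub_mul, mul_sub, one_mul, mul_one, smul_mul_assoc, mul_smul_comm, smul_smul,
    smul_sub, h]
  abel

end AuxAlgebra

namespace BAred

variable {R : Type} [CommRing R] {n : ℕ} {lam laminv δinv : R}

open BAredGen

lemma mk_eExpr (i : ℕ) :
    RingQuot.mkAlgHom R (BAredRel R n lam laminv δinv) (eExpr R δinv i) =
      (E i : BAred R n lam laminv δinv) := by
  simp only [eExpr, E, gen, g, map_sub, map_smul, map_one]
  rfl

lemma rel_mk {a b : FreeAlgebra R BAredGen} (h : BAredRel R n lam laminv δinv a b) :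
    RingQuot.mkAlgHom R (BAredRel R n lam laminv δinv) a =
      RingQuot.mkAlgHom R (BAredRel R n lam laminv δinv) b :=
  RingQuot.mkAlgHom_rel R h

lemma E_def (i : ℕ) :
    (E i : BAred R n lam laminv δinv) =
      1 - δinv • (gen (BAredGen.X i) - gen (BAredGen.Xinv i)) := rfl

lemma coeff_key {x δ : R} (hlam : lam * laminv = 1) (hδ : δ * δinv = 1)
    (hparam : (1 - x) * δ = lam - laminv) : δinv * (lam - laminv) = 1 - x := by
  have h : δinv * (lam - laminv) = (1 - x) * (δ * δinv) := by rw [← hparam]; ring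
  rw [h, hδ, mul_one]

variable {i j : ℕ} (hi1 : 1 ≤ i) (hi2 : i ≤ n - 1) (hj1 : 1 ≤ j) (hj2 : j ≤ n - 1)

include hi1 hi2

lemma X_mul_Xinv : (gen (X i) : BAred R n lam laminv δinv) * gen (Xinv i) = 1 := by
  have h := rel_mk (BAredRel.X_Xinv (lam := lam) (laminv := laminv) (δinv := δinv) i hi1 hi2)
  simp only [g, map_mul, map_smul, map_one, mk_eExpr] at h
  exact h

lemma Xinv_mul_X : (gen (Xinv i) : BAred R n lam laminv δinv) * gen (X i) = 1 := by
  have h := rel_mk (BAredRel.Xinv_X (lam := lam) (laminv := laminv) (δinv := δinv) i hi1 hi2)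
  simp only [g, map_mul, map_smul, map_one, mk_eExpr] at h
  exact h

lemma X_mul_E : (gen (X i) : BAred R n lam laminv δinv) * E i = lam • E i := by
  have h := rel_mk (BAredRel.Xe (lam := lam) (laminv := laminv) (δinv := δinv) i hi1 hi2)
  simp only [g, map_mul, map_smul, map_one, mk_eExpr] at h
  exact h

lemma E_mul_X : (E i : BAred R n lam laminv δinv) * gen (X i) = lam • E i := by
  have h := rel_mk (BAredRel.eX (lam := lam) (laminv := laminv) (δinv := δinv) i hi1 hi2)
  simp only [g, map_mul, map_smul, map_one, mk_eExpr] at h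
  exact h

include hj1 hj2

lemma Xcomm (hd : 1 < Nat.dist i j) :
    (gen (X i) : BAred R n lam laminv δinv) * gen (X j) = gen (X j) * gen (X i) := by
  have h := rel_mk (BAredRel.Xcomm (lam := lam) (laminv := laminv) (δinv := δinv) i j hi1 hi2 hj1 hj2 hd)
  simp only [g, map_mul, map_smul, map_one, mk_eExpr] at h
  exact h

lemma braid (hd : Nat.dist i j = 1) :
    (gen (X i) : BAred R n lam laminv δinv) * gen (X j) * gen (X i) =
      gen (X j) * gen (X i) * gen (X j) := by
  have h := rel_mk (BAredRel.braid (lam := lam) (laminv := laminv) (δinv := δinv) i j hi1 hi2 hj1 hj2 hd)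
  simp only [g, map_mul, map_smul, map_one, mk_eExpr] at h
  exact h

lemma E_mul_X_mul_E (hd : Nat.dist i j = 1) :
    (E i : BAred R n lam laminv δinv) * gen (X j) * E i = laminv • E i := by
  have h := rel_mk (BAredRel.eXe (lam := lam) (laminv := laminv) (δinv := δinv) i j hi1 hi2 hj1 hj2 hd)
  simp only [g, map_mul, map_smul, map_one, mk_eExpr] at h
  exact h

lemma E_mul_Xinv_mul_E (hd : Nat.dist i j = 1) :
    (E i : BAred R n lam laminv δinv) * gen (Xinv j) * E i = lam • E i := by
  have h := rel_mk (BAredRel.eXinve (lam := lam) (laminv := laminv) (δinv := δinv) i j hi1 hi2 hj1 hj2 hd)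
  simp only [g, map_mul, map_smul, map_one, mk_eExpr] at h
  exact h

omit hj1 hj2 in
lemma Xinv_mul_E (hlam : lam * laminv = 1) :
    (gen (Xinv i) : BAred R n lam laminv δinv) * E i = laminv • E i := by
  have h1 : (gen (Xinv i) : BAred R n lam laminv δinv) * (gen (X i) * E i) = E i := by
    rw [← mul_assoc, Xinv_mul_X hi1 hi2, one_mul]
  calc (gen (Xinv i) : BAred R n lam laminv δinv) * E i
      = (laminv * lam) • (gen (Xinv i) * E i) := by rw [mul_comm laminv lam, hlam, one_smul]
    _ = laminv • (gen (Xinv i) * (lam • E i)) := by rw [mul_smul, ← mul_smul_comm]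
    _ = laminv • (gen (Xinv i) * (gen (X i) * E i)) := by rw [← X_mul_E hi1 hi2]
    _ = laminv • E i := by rw [h1]

omit hj1 hj2 in
lemma E_mul_Xinv (hlam : lam * laminv = 1) :
    (E i : BAred R n lam laminv δinv) * gen (Xinv i) = laminv • E i := by
  have h1 : ((E i : BAred R n lam laminv δinv) * gen (X i)) * gen (Xinv i) = E i := by
    rw [mul_assoc, X_mul_Xinv hi1 hi2, mul_one]
  calc (E i : BAred R n lam laminv δinv) * gen (Xinv i)
      = (laminv * lam) • (E i * gen (Xinv i)) := by rw [mul_comm laminv lam, hlam, one_smul]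
    _ = laminv • ((lam • E i) * gen (Xinv i)) := by rw [mul_smul, ← smul_mul_assoc]
    _ = laminv • ((E i * gen (X i)) * gen (Xinv i)) := by rw [← E_mul_X hi1 hi2]
    _ = laminv • E i := by rw [h1]

omit hj1 hj2 in
lemma E_sq {x δ : R} (hlam : lam * laminv = 1) (hδ : δ * δinv = 1)
    (hparam : (1 - x) * δ = lam - laminv) :
    (E i : BAred R n lam laminv δinv) * E i = x • E i := by
  have hco := coeff_key (lam := lam) (laminv := laminv) (δinv := δinv)
    (x := x) (δ := δ) hlam hδ hparam
  nth_rewrite 1 [E_def i]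
  rw [sub_mul, one_mul, smul_mul_assoc, sub_mul, X_mul_E hi1 hi2,
    Xinv_mul_E hi1 hi2 hlam, smul_sub, smul_smul, smul_smul, ← sub_smul, ← mul_sub, hco,
    sub_smul, one_smul, sub_sub_cancel]

lemma E_comm (hd : 1 < Nat.dist i j) :
    (E i : BAred R n lam laminv δinv) * E j = E j * E i := by
  have hXX := Xcomm hi1 hi2 hj1 hj2 (lam := lam) (laminv := laminv) (δinv := δinv) hd
  have hXY : (gen (X i) : BAred R n lam laminv δinv) * gen (Xinv j) = gen (Xinv j) * gen (X i) :=
    aux_comm_inv_right hXX (X_mul_Xinv hj1 hj2) (Xinv_mul_X hj1 hj2)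
  have hYX : (gen (Xinv i) : BAred R n lam laminv δinv) * gen (X j) = gen (X j) * gen (Xinv i) :=
    (aux_comm_inv_right hXX.symm (X_mul_Xinv hi1 hi2) (Xinv_mul_X hi1 hi2)).symm
  have hYY : (gen (Xinv i) : BAred R n lam laminv δinv) * gen (Xinv j) =
      gen (Xinv j) * gen (Xinv i) :=
    aux_comm_inv_right hYX (X_mul_Xinv hj1 hj2) (Xinv_mul_X hj1 hj2)
  have hAB : ((gen (X i) : BAred R n lam laminv δinv) - gen (Xinv i)) *
      (gen (X j) - gen (Xinv j)) = (gen (X j) - gen (Xinv j)) * (gen (X i) - gen (Xinv i)) := by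
    simp only [sub_mul, mul_sub]
    rw [hXX, hXY, hYX, hYY]
    abel
  rw [E_def, E_def]
  exact aux_one_sub_smul_comm hAB

lemma E_mul_XX (hd : Nat.dist i j = 1) :
    (E i : BAred R n lam laminv δinv) * (gen (X j) * gen (X i)) =
      gen (X j) * gen (X i) * E j := by
  have hbr := braid hi1 hi2 hj1 hj2 (lam := lam) (laminv := laminv) (δinv := δinv) hd
  have hc : (gen (Xinv i) : BAred R n lam laminv δinv) * gen (X j) * gen (X i) =
      gen (X j) * gen (X i) * gen (Xinv j) :=
    aux_braid_conj (Xinv_mul_X hi1 hi2) (X_mul_Xinv hj1 hj2) hbr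
  have hA : ((gen (X i) : BAred R n lam laminv δinv) - gen (Xinv i)) *
      (gen (X j) * gen (X i)) =
      (gen (X j) * gen (X i)) * (gen (X j) - gen (Xinv j)) := by
    rw [sub_mul, mul_sub, ← mul_assoc, ← mul_assoc, hbr, hc]
  rw [E_def, E_def]
  exact aux_one_sub_smul_mul hA

lemma E_mul_XinvXinv (hd : Nat.dist i j = 1) :
    (E i : BAred R n lam laminv δinv) * (gen (Xinv j) * gen (Xinv i)) =
      gen (Xinv j) * gen (Xinv i) * E j := by
  have hbr := braid hi1 hi2 hj1 hj2 (lam := lam) (laminv := laminv) (δinv := δinv) hd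
  have hinvbr : (gen (Xinv i) : BAred R n lam laminv δinv) * gen (Xinv j) * gen (Xinv i) =
      gen (Xinv j) * gen (Xinv i) * gen (Xinv j) :=
    aux_inv_braid (X_mul_Xinv hi1 hi2) (Xinv_mul_X hi1 hi2) (X_mul_Xinv hj1 hj2)
      (Xinv_mul_X hj1 hj2) hbr
  have hc : (gen (X i) : BAred R n lam laminv δinv) * gen (Xinv j) * gen (Xinv i) =
      gen (Xinv j) * gen (Xinv i) * gen (X j) :=
    aux_braid_conj (X_mul_Xinv hi1 hi2) (Xinv_mul_X hj1 hj2) hinvbr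
  have hA : ((gen (X i) : BAred R n lam laminv δinv) - gen (Xinv i)) *
      (gen (Xinv j) * gen (Xinv i)) =
      (gen (Xinv j) * gen (Xinv i)) * (gen (X j) - gen (Xinv j)) := by
    rw [sub_mul, mul_sub, ← mul_assoc, ← mul_assoc, hc, hinvbr]
  rw [E_def, E_def]
  exact aux_one_sub_smul_mul hA

lemma E_mul_E_mul_E {x δ : R} (hlam : lam * laminv = 1) (hδ : δ * δinv = 1)
    (hparam : (1 - x) * δ = lam - laminv) (hd : Nat.dist i j = 1) :
    (E i : BAred R n lam laminv δinv) * E j * E i = E i := by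
  have hco := coeff_key (lam := lam) (laminv := laminv) (δinv := δinv)
    (x := x) (δ := δ) hlam hδ hparam
  rw [E_def j, mul_sub, mul_one, mul_smul_comm, mul_sub, sub_mul, smul_mul_assoc, sub_mul,
    E_sq hi1 hi2 hlam hδ hparam, E_mul_X_mul_E hi1 hi2 hj1 hj2 hd,
    E_mul_Xinv_mul_E hi1 hi2 hj1 hj2 hd, smul_sub, smul_smul, smul_smul]
  rw [← sub_smul, ← sub_smul]
  have : x - (δinv * laminv - δinv * lam) = 1 := by
    have : δinv * laminv - δinv * lam = -(δinv * (lam - laminv)) := by ring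
    rw [this, hco]; ring
  rw [this, one_smul]

end BAred

section Iso

/-- Enumeration of the out-of-range indices `{0} ∪ {i > n-1}`. -/
def encI (n k : ℕ) : ℕ := if k = 0 then 0 else (n - 1) + k

/-- Inverse of `encI` on out-of-range indices. -/
def decI (n i : ℕ) : ℕ := if i = 0 then 0 else i - (n - 1)

lemma encI_not_in (n k : ℕ) : ¬(1 ≤ encI n k ∧ encI n k ≤ n - 1) := by
  unfold encI; split <;> omega

lemma decI_encI (n k : ℕ) : decI n (encI n k) = k := by
  unfold encI decI
  rcases eq_or_ne k 0 with h | h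
  · simp [h]
  · rw [if_neg h, if_neg (by omega)]
    omega

lemma encI_decI {n i : ℕ} (h : ¬(1 ≤ i ∧ i ≤ n - 1)) : encI n (decI n i) = i := by
  unfold encI decI
  rcases eq_or_ne i 0 with h0 | h0
  · simp [h0]
  · rw [if_neg h0, if_neg (by omega)]
    omega

/-- Decoding of a natural number into an out-of-range reduced generator. -/
def redOut (n c : ℕ) : BAredGen :=
  if c % 2 = 0 then .X (encI n (c / 2)) else .Xinv (encI n (c / 2))

/-- Decoding of a natural number into an out-of-range BMW generator. -/
def baOut (n c : ℕ) : BAGen :=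
  if c % 3 = 0 then .X (encI n (c / 3))
  else if c % 3 = 1 then .Xinv (encI n (c / 3))
  else .e (encI n (c / 3))

lemma redOut_two (n k : ℕ) : redOut n (2 * k) = .X (encI n k) := by
  have h1 : (2 * k) % 2 = 0 := by omega
  have h2 : (2 * k) / 2 = k := by omega
  simp [redOut, h1, h2]

lemma redOut_two_one (n k : ℕ) : redOut n (2 * k + 1) = .Xinv (encI n k) := by
  have h1 : (2 * k + 1) % 2 = 1 := by omega
  have h2 : (2 * k + 1) / 2 = k := by omega
  simp [redOut, h1, h2]

lemma baOut_three (n k : ℕ) : baOut n (3 * k) = .X (encI n k) := by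
  have h1 : (3 * k) % 3 = 0 := by omega
  have h2 : (3 * k) / 3 = k := by omega
  simp [baOut, h1, h2]

lemma baOut_three_one (n k : ℕ) : baOut n (3 * k + 1) = .Xinv (encI n k) := by
  have h1 : (3 * k + 1) % 3 = 1 := by omega
  have h2 : (3 * k + 1) / 3 = k := by omega
  simp [baOut, h1, h2]

lemma baOut_three_two (n k : ℕ) : baOut n (3 * k + 2) = .e (encI n k) := by
  have h1 : (3 * k + 2) % 3 = 2 := by omega
  have h2 : (3 * k + 2) / 3 = k := by omega
  simp [baOut, h1, h2]

/-- The generator-level map underlying `ψ : BAred → BA`. -/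
def psiGen (n : ℕ) : BAredGen → BAGen
  | .X i => if 1 ≤ i ∧ i ≤ n - 1 then .X i else baOut n (2 * decI n i)
  | .Xinv i => if 1 ≤ i ∧ i ≤ n - 1 then .Xinv i else baOut n (2 * decI n i + 1)

variable {R : Type} [CommRing R]

/-- The generator-level map underlying `φ : BA → BAred`. -/
noncomputable def phiGen (n : ℕ) (lam laminv δinv : R) : BAGen → BAred R n lam laminv δinv
  | .X i => if 1 ≤ i ∧ i ≤ n - 1 then BAred.gen (.X i)
      else BAred.gen (redOut n (3 * decI n i))
  | .Xinv i => if 1 ≤ i ∧ i ≤ n - 1 then BAred.gen (.Xinv i)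
      else BAred.gen (redOut n (3 * decI n i + 1))
  | .e i => if 1 ≤ i ∧ i ≤ n - 1 then BAred.E i
      else BAred.gen (redOut n (3 * decI n i + 2))

variable {n : ℕ} {x lam laminv δ δinv : R}

lemma psiGen_redOut (n c : ℕ) : psiGen n (redOut n c) = baOut n c := by
  unfold redOut
  by_cases h : c % 2 = 0
  · rw [if_pos h]
    show psiGen n (.X (encI n (c / 2))) = _
    rw [psiGen, if_neg (encI_not_in n _), decI_encI]
    congr 1
    omega
  · rw [if_neg h]
    show psiGen n (.Xinv (encI n (c / 2))) = _
    rw [psiGen, if_neg (encI_not_in n _), decI_encI]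
    congr 1
    omega

lemma phiGen_baOut (c : ℕ) :
    phiGen n lam laminv δinv (baOut n c) = BAred.gen (redOut n c) := by
  unfold baOut
  by_cases h0 : c % 3 = 0
  · rw [if_pos h0]
    show phiGen n lam laminv δinv (.X (encI n (c / 3))) = _
    rw [phiGen, if_neg (encI_not_in n _), decI_encI, show 3 * (c / 3) = c by omega]
  · rw [if_neg h0]
    by_cases h1 : c % 3 = 1
    · rw [if_pos h1]
      show phiGen n lam laminv δinv (.Xinv (encI n (c / 3))) = _
      rw [phiGen, if_neg (encI_not_in n _), decI_encI, show 3 * (c / 3) + 1 = c by omega]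
    · rw [if_neg h1]
      show phiGen n lam laminv δinv (.e (encI n (c / 3))) = _
      rw [phiGen, if_neg (encI_not_in n _), decI_encI, show 3 * (c / 3) + 2 = c by omega]

lemma phiGen_X {i : ℕ} (h1 : 1 ≤ i) (h2 : i ≤ n - 1) :
    phiGen n lam laminv δinv (.X i) = BAred.gen (.X i) := by
  rw [phiGen, if_pos ⟨h1, h2⟩]

lemma phiGen_Xinv {i : ℕ} (h1 : 1 ≤ i) (h2 : i ≤ n - 1) :
    phiGen n lam laminv δinv (.Xinv i) = BAred.gen (.Xinv i) := by
  rw [phiGen, if_pos ⟨h1, h2⟩]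

lemma phiGen_e {i : ℕ} (h1 : 1 ≤ i) (h2 : i ≤ n - 1) :
    phiGen n lam laminv δinv (.e i) = BAred.E i := by
  rw [phiGen, if_pos ⟨h1, h2⟩]

lemma psiGen_X {i : ℕ} (h1 : 1 ≤ i) (h2 : i ≤ n - 1) :
    psiGen n (.X i) = .X i := by
  rw [psiGen, if_pos ⟨h1, h2⟩]

lemma psiGen_Xinv {i : ℕ} (h1 : 1 ≤ i) (h2 : i ≤ n - 1) :
    psiGen n (.Xinv i) = .Xinv i := by
  rw [psiGen, if_pos ⟨h1, h2⟩]

/-- The free-algebra level of `φ`. -/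
noncomputable def phi0 (n : ℕ) (lam laminv δinv : R) :
    FreeAlgebra R BAGen →ₐ[R] BAred R n lam laminv δinv :=
  FreeAlgebra.lift R (phiGen n lam laminv δinv)

/-- The free-algebra level of `ψ`. -/
noncomputable def psi0 (n : ℕ) (x lam laminv δ : R) :
    FreeAlgebra R BAredGen →ₐ[R] BA R n x lam laminv δ :=
  FreeAlgebra.lift R fun a =>
    RingQuot.mkAlgHom R (BAGen.BARel R n x lam laminv δ) (FreeAlgebra.ι R (psiGen n a))

lemma phi0_rel (hlam : lam * laminv = 1) (hδ : δ * δinv = 1)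
    (hparam : (1 - x) * δ = lam - laminv) :
    ∀ ⦃a b⦄, BAGen.BARel R n x lam laminv δ a b →
      phi0 n lam laminv δinv a = phi0 n lam laminv δinv b := by
  intro a b h
  cases h with
  | X_Xinv i h1 h2 =>
      simp only [phi0, BAGen.g, map_mul, map_one, FreeAlgebra.lift_ι_apply,
        phiGen_X h1 h2, phiGen_Xinv h1 h2]
      exact BAred.X_mul_Xinv h1 h2
  | Xinv_X i h1 h2 =>
      simp only [phi0, BAGen.g, map_mul, map_one, FreeAlgebra.lift_ι_apply,
        phiGen_X h1 h2, phiGen_Xinv h1 h2]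
      exact BAred.Xinv_mul_X h1 h2
  | Xcomm i j h1 h2 h3 h4 hd =>
      simp only [phi0, BAGen.g, map_mul, FreeAlgebra.lift_ι_apply,
        phiGen_X h1 h2, phiGen_X h3 h4]
      exact BAred.Xcomm h1 h2 h3 h4 hd
  | braid i j h1 h2 h3 h4 hd =>
      simp only [phi0, BAGen.g, map_mul, FreeAlgebra.lift_ι_apply,
        phiGen_X h1 h2, phiGen_X h3 h4]
      exact BAred.braid h1 h2 h3 h4 hd
  | Xe i h1 h2 =>
      simp only [phi0, BAGen.g, map_mul, map_smul, FreeAlgebra.lift_ι_apply,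
        phiGen_X h1 h2, phiGen_e h1 h2]
      exact BAred.X_mul_E h1 h2
  | eX i h1 h2 =>
      simp only [phi0, BAGen.g, map_mul, map_smul, FreeAlgebra.lift_ι_apply,
        phiGen_X h1 h2, phiGen_e h1 h2]
      exact BAred.E_mul_X h1 h2
  | eXe i j h1 h2 h3 h4 hd =>
      simp only [phi0, BAGen.g, map_mul, map_smul, FreeAlgebra.lift_ι_apply,
        phiGen_X h3 h4, phiGen_e h1 h2]
      exact BAred.E_mul_X_mul_E h1 h2 h3 h4 hd
  | eXinve i j h1 h2 h3 h4 hd =>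
      simp only [phi0, BAGen.g, map_mul, map_smul, FreeAlgebra.lift_ι_apply,
        phiGen_Xinv h3 h4, phiGen_e h1 h2]
      exact BAred.E_mul_Xinv_mul_E h1 h2 h3 h4 hd
  | ee i h1 h2 =>
      simp only [phi0, BAGen.g, map_mul, map_smul, FreeAlgebra.lift_ι_apply,
        phiGen_e h1 h2]
      exact BAred.E_sq h1 h2 hlam hδ hparam
  | Xinv_eq i h1 h2 =>
      simp only [phi0, BAGen.g, map_add, map_sub, map_smul, map_one,
        FreeAlgebra.lift_ι_apply, phiGen_X h1 h2, phiGen_Xinv h1 h2, phiGen_e h1 h2]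
      rw [BAred.E_def, smul_sub, smul_smul, hδ, one_smul]
      abel
  | ecomm i j h1 h2 h3 h4 hd =>
      simp only [phi0, BAGen.g, map_mul, FreeAlgebra.lift_ι_apply,
        phiGen_e h1 h2, phiGen_e h3 h4]
      exact BAred.E_comm h1 h2 h3 h4 hd
  | eXX i j h1 h2 h3 h4 hd =>
      simp only [phi0, BAGen.g, map_mul, FreeAlgebra.lift_ι_apply,
        phiGen_X h1 h2, phiGen_X h3 h4, phiGen_e h1 h2, phiGen_e h3 h4]
      exact BAred.E_mul_XX h1 h2 h3 h4 hd
  | eXinvXinv i j h1 h2 h3 h4 hd =>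
      simp only [phi0, BAGen.g, map_mul, FreeAlgebra.lift_ι_apply,
        phiGen_Xinv h1 h2, phiGen_Xinv h3 h4, phiGen_e h1 h2, phiGen_e h3 h4]
      exact BAred.E_mul_XinvXinv h1 h2 h3 h4 hd
  | eee i j h1 h2 h3 h4 hd =>
      simp only [phi0, BAGen.g, map_mul, FreeAlgebra.lift_ι_apply,
        phiGen_e h1 h2, phiGen_e h3 h4]
      exact BAred.E_mul_E_mul_E h1 h2 h3 h4 hlam hδ hparam hd

lemma ba_mk_e {i : ℕ} (hδ : δ * δinv = 1) (h1 : 1 ≤ i) (h2 : i ≤ n - 1) :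
    (1 : RingQuot (BAGen.BARel R n x lam laminv δ)) -
      δinv • (RingQuot.mkAlgHom R (BAGen.BARel R n x lam laminv δ) (FreeAlgebra.ι R (.X i)) -
        RingQuot.mkAlgHom R (BAGen.BARel R n x lam laminv δ) (FreeAlgebra.ι R (.Xinv i))) =
      RingQuot.mkAlgHom R (BAGen.BARel R n x lam laminv δ) (FreeAlgebra.ι R (.e i)) := by
  have h := RingQuot.mkAlgHom_rel R (BAGen.BARel.Xinv_eq (R := R) (x := x) (lam := lam)
    (laminv := laminv) (δ := δ) i h1 h2)
  simp only [BAGen.g, map_sub, map_add, map_smul, map_one] at h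
  have hkey : RingQuot.mkAlgHom R (BAGen.BARel R n x lam laminv δ) (FreeAlgebra.ι R (.X i)) -
      RingQuot.mkAlgHom R (BAGen.BARel R n x lam laminv δ) (FreeAlgebra.ι R (.Xinv i)) =
      δ • ((1 : RingQuot (BAGen.BARel R n x lam laminv δ)) -
        RingQuot.mkAlgHom R (BAGen.BARel R n x lam laminv δ) (FreeAlgebra.ι R (.e i))) := by
    rw [h, smul_sub]
    abel
  rw [hkey, smul_smul, mul_comm δinv δ, hδ, one_smul, sub_sub_cancel]

lemma psi0_ι (a : BAredGen) :
    psi0 n x lam laminv δ (FreeAlgebra.ι R a) =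
      RingQuot.mkAlgHom R (BAGen.BARel R n x lam laminv δ) (FreeAlgebra.ι R (psiGen n a)) :=
  FreeAlgebra.lift_ι_apply _ _

lemma psi0_eExpr {i : ℕ} (hδ : δ * δinv = 1) (h1 : 1 ≤ i) (h2 : i ≤ n - 1) :
    psi0 n x lam laminv δ (BAredGen.eExpr R δinv i) =
      RingQuot.mkAlgHom R (BAGen.BARel R n x lam laminv δ) (FreeAlgebra.ι R (.e i)) := by
  simp only [BAredGen.eExpr, BAredGen.g, map_sub, map_smul, map_one,
    psi0_ι, psiGen_X h1 h2, psiGen_Xinv h1 h2]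
  exact ba_mk_e hδ h1 h2

lemma psi0_rel (hδ : δ * δinv = 1) :
    ∀ ⦃a b⦄, BAredGen.BAredRel R n lam laminv δinv a b →
      psi0 n x lam laminv δ a = psi0 n x lam laminv δ b := by
  intro a b h
  cases h with
  | X_Xinv i h1 h2 =>
      simp only [BAredGen.g, map_mul, map_one, psi0_ι,
        psiGen_X h1 h2, psiGen_Xinv h1 h2]
      have h := RingQuot.mkAlgHom_rel R (BAGen.BARel.X_Xinv (R := R) (x := x)
        (lam := lam) (laminv := laminv) (δ := δ) i h1 h2)
      simp only [BAGen.g, map_mul, map_smul, map_one] at h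
      exact h
  | Xinv_X i h1 h2 =>
      simp only [BAredGen.g, map_mul, map_one, psi0_ι,
        psiGen_X h1 h2, psiGen_Xinv h1 h2]
      have h := RingQuot.mkAlgHom_rel R (BAGen.BARel.Xinv_X (R := R) (x := x)
        (lam := lam) (laminv := laminv) (δ := δ) i h1 h2)
      simp only [BAGen.g, map_mul, map_smul, map_one] at h
      exact h
  | Xcomm i j h1 h2 h3 h4 hd =>
      simp only [BAredGen.g, map_mul, psi0_ι,
        psiGen_X h1 h2, psiGen_X h3 h4]
      have h := RingQuot.mkAlgHom_rel R (BAGen.BARel.Xcomm (R := R) (x := x)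
        (lam := lam) (laminv := laminv) (δ := δ) i j h1 h2 h3 h4 hd)
      simp only [BAGen.g, map_mul, map_smul, map_one] at h
      exact h
  | braid i j h1 h2 h3 h4 hd =>
      simp only [BAredGen.g, map_mul, psi0_ι,
        psiGen_X h1 h2, psiGen_X h3 h4]
      have h := RingQuot.mkAlgHom_rel R (BAGen.BARel.braid (R := R) (x := x)
        (lam := lam) (laminv := laminv) (δ := δ) i j h1 h2 h3 h4 hd)
      simp only [BAGen.g, map_mul, map_smul, map_one] at h
      exact h
  | Xe i h1 h2 =>
      simp only [map_mul, map_smul, psi0_eExpr hδ h1 h2]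
      simp only [BAredGen.g, psi0_ι, psiGen_X h1 h2]
      have h := RingQuot.mkAlgHom_rel R (BAGen.BARel.Xe (R := R) (x := x)
        (lam := lam) (laminv := laminv) (δ := δ) i h1 h2)
      simp only [BAGen.g, map_mul, map_smul, map_one] at h
      exact h
  | eX i h1 h2 =>
      simp only [map_mul, map_smul, psi0_eExpr hδ h1 h2]
      simp only [BAredGen.g, psi0_ι, psiGen_X h1 h2]
      have h := RingQuot.mkAlgHom_rel R (BAGen.BARel.eX (R := R) (x := x)
        (lam := lam) (laminv := laminv) (δ := δ) i h1 h2)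
      simp only [BAGen.g, map_mul, map_smul, map_one] at h
      exact h
  | eXe i j h1 h2 h3 h4 hd =>
      simp only [map_mul, map_smul, psi0_eExpr hδ h1 h2]
      simp only [BAredGen.g, psi0_ι, psiGen_X h3 h4]
      have h := RingQuot.mkAlgHom_rel R (BAGen.BARel.eXe (R := R) (x := x)
        (lam := lam) (laminv := laminv) (δ := δ) i j h1 h2 h3 h4 hd)
      simp only [BAGen.g, map_mul, map_smul, map_one] at h
      exact h
  | eXinve i j h1 h2 h3 h4 hd =>
      simp only [map_mul, map_smul, psi0_eExpr hδ h1 h2]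
      simp only [BAredGen.g, psi0_ι, psiGen_Xinv h3 h4]
      have h := RingQuot.mkAlgHom_rel R (BAGen.BARel.eXinve (R := R) (x := x)
        (lam := lam) (laminv := laminv) (δ := δ) i j h1 h2 h3 h4 hd)
      simp only [BAGen.g, map_mul, map_smul, map_one] at h
      exact h

/-- The algebra map `φ : BA → BAred`. -/
noncomputable def phiHom (hlam : lam * laminv = 1) (hδ : δ * δinv = 1)
    (hparam : (1 - x) * δ = lam - laminv) :
    BA R n x lam laminv δ →ₐ[R] BAred R n lam laminv δinv :=
  RingQuot.liftAlgHom R ⟨phi0 n lam laminv δinv, phi0_rel hlam hδ hparam⟩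

/-- The algebra map `ψ : BAred → BA`. -/
noncomputable def psiHom (hδ : δ * δinv = 1) :
    BAred R n lam laminv δinv →ₐ[R] BA R n x lam laminv δ :=
  RingQuot.liftAlgHom R ⟨psi0 n x lam laminv δ, psi0_rel hδ⟩

lemma psiHom_gen (hδ : δ * δinv = 1) (b : BAredGen) :
    psiHom (n := n) (x := x) (lam := lam) (laminv := laminv) (δinv := δinv) hδ (BAred.gen b) =
      RingQuot.mkAlgHom R (BAGen.BARel R n x lam laminv δ) (FreeAlgebra.ι R (psiGen n b)) := by
  rw [BAred.gen, psiHom]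
  erw [RingQuot.liftAlgHom_mkAlgHom_apply]
  simp only [psi0_ι]
  rfl

lemma phiGen_psiGen (a : BAredGen) :
    phiGen n lam laminv δinv (psiGen n a) = BAred.gen a := by
  cases a with
  | X i =>
      by_cases h : 1 ≤ i ∧ i ≤ n - 1
      · rw [psiGen, if_pos h, phiGen, if_pos h]
      · rw [psiGen, if_neg h, phiGen_baOut, redOut_two, encI_decI h]
  | Xinv i =>
      by_cases h : 1 ≤ i ∧ i ≤ n - 1
      · rw [psiGen, if_pos h, phiGen, if_pos h]
      · rw [psiGen, if_neg h, phiGen_baOut, redOut_two_one, encI_decI h]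

lemma psiHom_phiGen (hδ : δ * δinv = 1) (a : BAGen) :
    psiHom (n := n) (x := x) (lam := lam) (laminv := laminv) (δinv := δinv) hδ
        (phiGen n lam laminv δinv a) =
      RingQuot.mkAlgHom R (BAGen.BARel R n x lam laminv δ) (FreeAlgebra.ι R a) := by
  cases a with
  | X i =>
      by_cases h : 1 ≤ i ∧ i ≤ n - 1
      · rw [phiGen, if_pos h, psiHom_gen hδ, psiGen_X h.1 h.2]
      · rw [phiGen, if_neg h, psiHom_gen hδ, psiGen_redOut, baOut_three, encI_decI h]
  | Xinv i =>
      by_cases h : 1 ≤ i ∧ i ≤ n - 1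
      · rw [phiGen, if_pos h, psiHom_gen hδ, psiGen_Xinv h.1 h.2]
      · rw [phiGen, if_neg h, psiHom_gen hδ, psiGen_redOut, baOut_three_one, encI_decI h]
  | e i =>
      by_cases h : 1 ≤ i ∧ i ≤ n - 1
      · rw [phiGen, if_pos h, BAred.E_def]
        simp only [map_sub, map_smul, map_one, psiHom_gen hδ, psiGen_X h.1 h.2,
          psiGen_Xinv h.1 h.2]
        exact ba_mk_e hδ h.1 h.2
      · rw [phiGen, if_neg h, psiHom_gen hδ, psiGen_redOut, baOut_three_two, encI_decI h]

lemma phi_psi (hlam : lam * laminv = 1) (hδ : δ * δinv = 1)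
    (hparam : (1 - x) * δ = lam - laminv) :
    (phiHom (n := n) (δinv := δinv) hlam hδ hparam).comp
        (psiHom (n := n) (x := x) (δinv := δinv) hδ) =
      AlgHom.id R (BAred R n lam laminv δinv) := by
  apply RingQuot.ringQuot_ext'
  apply FreeAlgebra.hom_ext
  funext a
  simp only [Function.comp_apply, AlgHom.coe_comp, AlgHom.coe_id, id_eq]
  show (phiHom (n := n) (δinv := δinv) hlam hδ hparam) ((psiHom (n := n) (x := x) (δinv := δinv) hδ)
      (RingQuot.mkAlgHom R (BAredGen.BAredRel R n lam laminv δinv) (FreeAlgebra.ι R a))) =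
    RingQuot.mkAlgHom R (BAredGen.BAredRel R n lam laminv δinv) (FreeAlgebra.ι R a)
  rw [show ((RingQuot.mkAlgHom R (BAredGen.BAredRel R n lam laminv δinv))
      (FreeAlgebra.ι R a)) = BAred.gen a from rfl]
  erw [psiHom_gen hδ]
  rw [phiHom]
  erw [RingQuot.liftAlgHom_mkAlgHom_apply]
  simp only [phi0, FreeAlgebra.lift_ι_apply]
  exact phiGen_psiGen a

lemma psi_phi (hlam : lam * laminv = 1) (hδ : δ * δinv = 1)
    (hparam : (1 - x) * δ = lam - laminv) :
    (psiHom (n := n) (x := x) (δinv := δinv) hδ).comp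
        (phiHom (n := n) (δinv := δinv) hlam hδ hparam) =
      AlgHom.id R (BA R n x lam laminv δ) := by
  apply RingQuot.ringQuot_ext'
  apply FreeAlgebra.hom_ext
  funext a
  simp only [Function.comp_apply, AlgHom.coe_comp, AlgHom.coe_id, id_eq]
  show (psiHom (n := n) (x := x) (δinv := δinv) hδ) ((phiHom (n := n) (δinv := δinv) hlam hδ hparam)
      (RingQuot.mkAlgHom R (BAGen.BARel R n x lam laminv δ) (FreeAlgebra.ι R a))) =
    RingQuot.mkAlgHom R (BAGen.BARel R n x lam laminv δ) (FreeAlgebra.ι R a)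
  rw [phiHom]
  erw [RingQuot.liftAlgHom_mkAlgHom_apply]
  simp only [phi0, FreeAlgebra.lift_ι_apply]
  exact psiHom_phiGen hδ a

end Iso

/-- If `δ` is a unit in `R`, the BMW algebra `BA_n(R)` is isomorphic to the
algebra generated by invertible `X_1, …, X_{n−1}` subject only to the braid
relations, `X_i e_i = e_i X_i = λ e_i` and `e_i X_j^{±1} e_i = λ^{∓1} e_i` for
`|i−j| = 1`, with `e_i := 1 − δ⁻¹(X_i − X_i⁻¹)`.  In particular, with this
definition of `e_i`, the relations `e_i² = x e_i`, `e_i e_j = e_j e_i` for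
`|i−j| > 1`, `e_i X_j^{±1} X_i^{±1} = X_j^{±1} X_i^{±1} e_j` for `|i−j| = 1`,
and `e_i e_j e_i = e_i` for `|i−j| = 1` all hold. -/
theorem stmt4 {R : Type} [CommRing R] [IsDomain R] (n : ℕ)
    (x lam laminv δ δinv : R)
    (hx : IsUnit x) (hlam : lam * laminv = 1) (hδ : δ * δinv = 1)
    (hparam : (1 - x) * δ = lam - laminv) :
    Nonempty (BA R n x lam laminv δ ≃ₐ[R] BAred R n lam laminv δinv) ∧
    (∀ i, 1 ≤ i → i ≤ n - 1 →
      (BAred.E i : BAred R n lam laminv δinv) * BAred.E i = x • BAred.E i) ∧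
    (∀ i j, 1 ≤ i → i ≤ n - 1 → 1 ≤ j → j ≤ n - 1 → 1 < Nat.dist i j →
      (BAred.E i : BAred R n lam laminv δinv) * BAred.E j = BAred.E j * BAred.E i) ∧
    (∀ i j, 1 ≤ i → i ≤ n - 1 → 1 ≤ j → j ≤ n - 1 → Nat.dist i j = 1 →
      (BAred.E i : BAred R n lam laminv δinv) *
          (BAred.gen (BAredGen.X j) * BAred.gen (BAredGen.X i)) =
        BAred.gen (BAredGen.X j) * BAred.gen (BAredGen.X i) * BAred.E j) ∧
    (∀ i j, 1 ≤ i → i ≤ n - 1 → 1 ≤ j → j ≤ n - 1 → Nat.dist i j = 1 →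
      (BAred.E i : BAred R n lam laminv δinv) *
          (BAred.gen (BAredGen.Xinv j) * BAred.gen (BAredGen.Xinv i)) =
        BAred.gen (BAredGen.Xinv j) * BAred.gen (BAredGen.Xinv i) * BAred.E j) ∧
    (∀ i j, 1 ≤ i → i ≤ n - 1 → 1 ≤ j → j ≤ n - 1 → Nat.dist i j = 1 →
      (BAred.E i : BAred R n lam laminv δinv) * BAred.E j * BAred.E i = BAred.E i) := by
  refine ⟨⟨AlgEquiv.ofAlgHom (phiHom hlam hδ hparam) (psiHom hδ)
      (phi_psi hlam hδ hparam) (psi_phi hlam hδ hparam)⟩,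
    fun i h1 h2 => BAred.E_sq h1 h2 hlam hδ hparam,
    fun i j h1 h2 h3 h4 hd => BAred.E_comm h1 h2 h3 h4 hd,
    fun i j h1 h2 h3 h4 hd => BAred.E_mul_XX h1 h2 h3 h4 hd,
    fun i j h1 h2 h3 h4 hd => BAred.E_mul_XinvXinv h1 h2 h3 h4 hd,
    fun i j h1 h2 h3 h4 hd => BAred.E_mul_E_mul_E h1 h2 h3 h4 hlam hδ hparam hd⟩
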